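/- Let H be a real Hilbert space, I = {1,...,n}, μ > 0, and for each i ∈ I let λ_i > 0 with Σ_{i∈I} λ_i = 1 and let A_i : H ⇉ H be maximally monotone. Then the Fitzpatrick functions satisfy F_{μ R_μ(A,λ)} ≤ Σ_{i∈I} λ_i F_{μ A_i} pointwise on H × H, and Σ_{i∈I} λ_i dom F_{μ A_i} ⊆ dom F_{μ R_μ(A,λ)} (Minkowski sum of the domains). -/
import Mathlib


open RealInnerProductSpace

namespace SVP

variable {H : Type*} [NormedAddCommGroup H] [InnerProductSpace ℝ H]

/-- Inverse of a set-valued mapping: `x ∈ inv A u ↔ u ∈ A x`. -/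
def inv (A : H → Set H) : H → Set H := fun u => {x | u ∈ A x}

/-- Pointwise (Minkowski) sum of two set-valued mappings. -/
def add (A B : H → Set H) : H → Set H := fun x => {w | ∃ u ∈ A x, ∃ v ∈ B x, w = u + v}

/-- Pointwise difference of two set-valued mappings. -/
def sub (A B : H → Set H) : H → Set H := fun x => {w | ∃ u ∈ A x, ∃ v ∈ B x, w = u - v}

/-- Pointwise scalar multiple of a set-valued mapping. -/
def smul (c : ℝ) (A : H → Set H) : H → Set H := fun x => (fun u => c • u) '' A x

/-- The identity as a set-valued mapping. -/
def id' : H → Set H := fun x => {x}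

/-- Composition of set-valued mappings: `(comp A B) x = ⋃ y ∈ B x, A y`. -/
def comp (A B : H → Set H) : H → Set H := fun x => ⋃ y ∈ B x, A y

/-- Weighted pointwise (Minkowski) combination `Σ_i lam i • (B i)`. -/
def lcomb {n : ℕ} (lam : Fin n → ℝ) (B : Fin n → H → Set H) : H → Set H :=
  fun x => {u | ∃ v : Fin n → H, (∀ i, v i ∈ B i x) ∧ u = ∑ i, lam i • v i}

/-- The `λ`-weighted resolvent average with parameter `μ`:
`R_μ(A, λ) = (Σ_i λ_i (A_i + μ⁻¹ Id)⁻¹)⁻¹ − μ⁻¹ Id`. -/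
def resAvg {n : ℕ} (μ : ℝ) (lam : Fin n → ℝ) (A : Fin n → H → Set H) : H → Set H :=
  sub (inv (lcomb lam (fun i => inv (add (A i) (smul μ⁻¹ id'))))) (smul μ⁻¹ id')

/-- Monotonicity of a set-valued mapping. -/
def IsMonotone (A : H → Set H) : Prop :=
  ∀ ⦃x y u v : H⦄, u ∈ A x → v ∈ A y → 0 ≤ ⟪x - y, u - v⟫

/-- Maximal monotonicity: the graph is not properly contained in the graph of
another monotone mapping. -/
def IsMaxMonotone (A : H → Set H) : Prop :=
  IsMonotone A ∧ ∀ B : H → Set H, IsMonotone B → (∀ x, A x ⊆ B x) → ∀ x, B x ⊆ A x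

/-- Domain of a set-valued mapping. -/
def dom (A : H → Set H) : Set H := {x | (A x).Nonempty}

/-- Range of a set-valued mapping. -/
def ran (A : H → Set H) : Set H := {u | ∃ x, u ∈ A x}

/-- Graph of a set-valued mapping. -/
def graph (A : H → Set H) : Set (H × H) := {p | p.2 ∈ A p.1}

end SVP

variable {H : Type*} [NormedAddCommGroup H] [InnerProductSpace ℝ H] [CompleteSpace H]

/-- The Fitzpatrick function of a set-valued mapping `A`:
`F_A(x, v) = sup_{(z,w) ∈ gra A} (⟪w, x⟫ + ⟪v, z⟫ − ⟪w, z⟫)`, valued in `EReal`. -/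
noncomputable def fitz (A : H → Set H) : H × H → EReal :=
  fun p => ⨆ q ∈ SVP.graph A, ((⟪q.2, p.1⟫ + ⟪p.2, q.1⟫ - ⟪q.2, q.1⟫ : ℝ) : EReal)

section helpers

lemma ereal_coe_sum {n : ℕ} (f : Fin n → ℝ) :
    ((∑ i, f i : ℝ) : EReal) = ∑ i, ((f i : ℝ) : EReal) :=
  map_sum (⟨⟨Real.toEReal, EReal.coe_zero⟩, fun a b => EReal.coe_add a b⟩ : ℝ →+ EReal) f
    Finset.univ

lemma mem_graph_resAvg' {n : ℕ} {μ : ℝ} (hμ : μ ≠ 0) {lam : Fin n → ℝ}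
    {A : Fin n → H → Set H} {x w : H}
    (h : w ∈ SVP.smul μ (SVP.resAvg μ lam A) x) :
    ∃ (c : H) (z : Fin n → H), (∀ i, c - z i ∈ SVP.smul μ (A i) (z i)) ∧
      x = ∑ i, lam i • z i ∧ w = c - x := by
  obtain ⟨v, hv, rfl⟩ := h
  obtain ⟨u, hu, b, hb, rfl⟩ := hv
  obtain ⟨b', hb', rfl⟩ := hb
  have hb'' : b' = x := hb'
  obtain ⟨z, hz, hx⟩ := hu
  refine ⟨μ • u, z, ?_, hx, ?_⟩
  · intro i
    obtain ⟨a, ha, b2, hb2, hu2⟩ := hz i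
    obtain ⟨b2', hb2', rfl⟩ := hb2
    have hb2'' : b2' = z i := hb2'
    subst hb2''
    refine ⟨a, ha, ?_⟩
    beta_reduce
    rw [hu2]
    beta_reduce
    rw [smul_add, smul_smul, mul_inv_cancel₀ hμ, one_smul]
    abel
  · subst hb''
    beta_reduce
    rw [smul_sub, smul_smul, mul_inv_cancel₀ hμ, one_smul]

lemma sum_lam_inner {n : ℕ} (lam : Fin n → ℝ) (y : Fin n → H) (u Y : H)
    (hY : ∑ i, lam i • y i = Y) : ∑ i, lam i * ⟪u, y i⟫ = ⟪u, Y⟫ := by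
  rw [← hY, inner_sum]
  exact Finset.sum_congr rfl fun i _ => (real_inner_smul_right u (y i) (lam i)).symm

lemma core_ineq {n : ℕ} (lam : Fin n → ℝ) (hpos : ∀ i, 0 ≤ lam i) (hsum : ∑ i, lam i = 1)
    (x v z : Fin n → H) (c X V Z : H)
    (hX : ∑ i, lam i • x i = X) (hV : ∑ i, lam i • v i = V) (hZ : ∑ i, lam i • z i = Z) :
    ⟪c - Z, X⟫ + ⟪V, Z⟫ - ⟪c - Z, Z⟫ ≤
      ∑ i, lam i * ((⟪c - z i, x i⟫ + ⟪v i, z i⟫ - ⟪c - z i, z i⟫)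
        + ‖x i - X + V - v i‖ ^ 2 / 4) := by
  set G : Fin n → ℝ := fun i =>
    ⟪c, x i⟫ - ⟪c, z i⟫ - ⟪X, z i⟫ + ⟪V, z i⟫ - ⟪Z, x i⟫ + ⟪Z, v i⟫
      + ⟪Z, z i⟫ + ⟪Z, z i⟫ + (⟪Z, X⟫ - ⟪Z, V⟫ - ⟪Z, Z⟫) with hG
  have key : ∀ i, (⟪c - z i, x i⟫ + ⟪v i, z i⟫ - ⟪c - z i, z i⟫)
      + ‖x i - X + V - v i‖ ^ 2 / 4
      = G i + ‖z i - Z - (2⁻¹ : ℝ) • (x i - X + V - v i)‖ ^ 2 := by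
    intro i
    simp only [hG, ← real_inner_self_eq_norm_sq, inner_sub_left, inner_sub_right,
      inner_add_left, inner_add_right, real_inner_smul_left, real_inner_smul_right]
    linarith [real_inner_comm c (x i), real_inner_comm c (z i), real_inner_comm c X,
      real_inner_comm c V, real_inner_comm c Z, real_inner_comm (x i) (z i),
      real_inner_comm (x i) X, real_inner_comm (x i) V, real_inner_comm (x i) Z,
      real_inner_comm (x i) (v i), real_inner_comm (z i) X, real_inner_comm (z i) V,
      real_inner_comm (z i) Z, real_inner_comm (z i) (v i), real_inner_comm X V,
      real_inner_comm X Z, real_inner_comm V Z, real_inner_comm (v i) X,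
      real_inner_comm (v i) V, real_inner_comm (v i) Z]
  have hGsum : ∑ i, lam i * G i
      = ⟪c, X⟫ - ⟪c, Z⟫ - ⟪X, Z⟫ + ⟪V, Z⟫ - ⟪Z, X⟫ + ⟪Z, V⟫ + ⟪Z, Z⟫ + ⟪Z, Z⟫
        + (⟪Z, X⟫ - ⟪Z, V⟫ - ⟪Z, Z⟫) := by
    simp only [hG, mul_add, mul_sub]
    simp only [Finset.sum_add_distrib, Finset.sum_sub_distrib]
    rw [sum_lam_inner lam x c X hX, sum_lam_inner lam z c Z hZ,
      sum_lam_inner lam z X Z hZ, sum_lam_inner lam z V Z hZ,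
      sum_lam_inner lam x Z X hX, sum_lam_inner lam v Z V hV,
      sum_lam_inner lam z Z Z hZ, ← Finset.sum_mul, ← Finset.sum_mul, ← Finset.sum_mul, hsum]
    ring
  calc ⟪c - Z, X⟫ + ⟪V, Z⟫ - ⟪c - Z, Z⟫ ≤ ∑ i, lam i * G i := by
        rw [hGsum]
        simp only [inner_sub_left]
        linarith [real_inner_comm X Z, real_inner_comm V Z, real_inner_comm Z c]
    _ ≤ ∑ i, lam i * (G i + ‖z i - Z - (2⁻¹ : ℝ) • (x i - X + V - v i)‖ ^ 2) := by
        refine Finset.sum_le_sum fun i _ => ?_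
        have := sq_nonneg ‖z i - Z - (2⁻¹ : ℝ) • (x i - X + V - v i)‖
        nlinarith [hpos i]
    _ = _ := by
        refine Finset.sum_congr rfl fun i _ => ?_
        rw [key i]

end helpers

/-- `F_{μR_μ(A,λ)} ≤ Σᵢ λᵢ F_{μAᵢ}` pointwise, and
`Σᵢ λᵢ dom F_{μAᵢ} ⊆ dom F_{μR_μ(A,λ)}`. -/
theorem stmt9 {n : ℕ} (hn : 0 < n) {μ : ℝ} (hμ : 0 < μ) (lam : Fin n → ℝ)
    (hpos : ∀ i, 0 < lam i) (hsum : ∑ i, lam i = 1) (A : Fin n → H → Set H)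
    (hA : ∀ i, SVP.IsMaxMonotone (A i)) :
    (∀ p : H × H,
      fitz (SVP.smul μ (SVP.resAvg μ lam A)) p
        ≤ ∑ i, ((lam i : ℝ) : EReal) * fitz (SVP.smul μ (A i)) p) ∧
    {q : H × H | ∃ p : Fin n → H × H,
        (∀ i, p i ∈ {r : H × H | fitz (SVP.smul μ (A i)) r < ⊤}) ∧
        q = ∑ i, lam i • p i} ⊆
      {r : H × H | fitz (SVP.smul μ (SVP.resAvg μ lam A)) r < ⊤} := by
  constructor
  · intro p
    refine iSup₂_le fun q hq => ?_
    obtain ⟨c, z, hz, hx, hw⟩ := mem_graph_resAvg' hμ.ne' hq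
    have hX : ∑ i, lam i • p.1 = p.1 := by rw [← Finset.sum_smul, hsum, one_smul]
    have hV : ∑ i, lam i • p.2 = p.2 := by rw [← Finset.sum_smul, hsum, one_smul]
    have hcore := core_ineq lam (fun i => (hpos i).le) hsum (fun _ => p.1) (fun _ => p.2) z
      c p.1 p.2 q.1 hX hV hx.symm
    calc ((⟪q.2, p.1⟫ + ⟪p.2, q.1⟫ - ⟪q.2, q.1⟫ : ℝ) : EReal)
        ≤ ((∑ i, lam i * (⟪c - z i, p.1⟫ + ⟪p.2, z i⟫ - ⟪c - z i, z i⟫) : ℝ) : EReal) := by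
          rw [EReal.coe_le_coe_iff, hw]
          refine hcore.trans (le_of_eq ?_)
          simp
      _ = ∑ i, ((lam i : ℝ) : EReal) * ((⟪c - z i, p.1⟫ + ⟪p.2, z i⟫ - ⟪c - z i, z i⟫ : ℝ)
            : EReal) := by
          rw [ereal_coe_sum]
          exact Finset.sum_congr rfl fun i _ => (EReal.coe_mul _ _)
      _ ≤ ∑ i, ((lam i : ℝ) : EReal) * fitz (SVP.smul μ (A i)) p := by
          refine Finset.sum_le_sum fun i _ => ?_
          refine mul_le_mul_of_nonneg_left ?_ (by exact_mod_cast (hpos i).le)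
          exact le_iSup₂ (f := fun q (_ : q ∈ SVP.graph (SVP.smul μ (A i))) =>
            ((⟪q.2, p.1⟫ + ⟪p.2, q.1⟫ - ⟪q.2, q.1⟫ : ℝ) : EReal)) (z i, c - z i) (hz i)
  · rintro q ⟨p, hp, rfl⟩
    set X : H := (∑ j, lam j • p j).1 with hXdef
    set V : H := (∑ j, lam j • p j).2 with hVdef
    have hX : ∑ i, lam i • (p i).1 = X := by
      rw [hXdef, Prod.fst_sum]
      exact Finset.sum_congr rfl fun i _ => rfl
    have hV : ∑ i, lam i • (p i).2 = V := by
      rw [hVdef, Prod.snd_sum]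
      exact Finset.sum_congr rfl fun i _ => rfl
    set r : Fin n → ℝ := fun i => (fitz (SVP.smul μ (A i)) (p i)).toReal with hr
    set B : ℝ := ∑ i, lam i * (r i + ‖(p i).1 - X + V - (p i).2‖ ^ 2 / 4) with hB
    refine lt_of_le_of_lt (iSup₂_le fun q hq => ?_) (EReal.coe_lt_top B)
    obtain ⟨c, z, hz, hx, hw⟩ := mem_graph_resAvg' hμ.ne' hq
    have hdF : ∀ i, ((⟪c - z i, (p i).1⟫ + ⟪(p i).2, z i⟫ - ⟪c - z i, z i⟫ : ℝ) : EReal)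
        ≤ fitz (SVP.smul μ (A i)) (p i) := fun i =>
      le_iSup₂ (f := fun q (_ : q ∈ SVP.graph (SVP.smul μ (A i))) =>
        ((⟪q.2, (p i).1⟫ + ⟪(p i).2, q.1⟫ - ⟪q.2, q.1⟫ : ℝ) : EReal)) (z i, c - z i) (hz i)
    have hne : ∀ i, fitz (SVP.smul μ (A i)) (p i) ≠ ⊥ := fun i =>
      ((EReal.bot_lt_coe _).trans_le (hdF i)).ne'
    have hco : ∀ i, fitz (SVP.smul μ (A i)) (p i) = ((r i : ℝ) : EReal) := fun i =>
      (EReal.coe_toReal (hp i).ne (hne i)).symm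
    have hdr : ∀ i, ⟪c - z i, (p i).1⟫ + ⟪(p i).2, z i⟫ - ⟪c - z i, z i⟫ ≤ r i := fun i =>
      EReal.coe_le_coe_iff.mp ((hdF i).trans_eq (hco i))
    have hcore := core_ineq lam (fun i => (hpos i).le) hsum (fun i => (p i).1)
      (fun i => (p i).2) z c X V q.1 hX hV hx.symm
    rw [hw, EReal.coe_le_coe_iff]
    refine hcore.trans ?_
    rw [hB]
    refine Finset.sum_le_sum fun i _ => ?_
    exact mul_le_mul_of_nonneg_left (by linarith [hdr i]) (hpos i).le
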